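/- The functions f_{0,0}(x) = 1, f_{0,−3}(x) = 1 − 3M/r(x), and f_{1,−3}(x) = 1/r(x) are bounded nonzero solutions of H_{ℓ,σ} f = −f'' + V_{ℓ,σ} f = 0 for (ℓ,σ) = (0,0), (0,−3), (1,−3) respectively, where V_{ℓ,σ}(x) = (1 − 2M/r(x))(ℓ(ℓ+1)/r(x)² + 2Mσ/r(x)³) and r(x) is the inverse tortoise coordinate. Hence the operator H_{ℓ,σ} has a zero energy resonance in each of these three cases. -/

import Mathlib

open Set

/-- The functions `f_{0,0} = 1`, `f_{0,−3} = 1 − 3M/r(x)`, `f_{1,−3} = 1/r(x)` are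
bounded nonzero solutions of `−f'' + V_{ℓ,σ} f = 0` for `(ℓ,σ) = (0,0), (0,−3), (1,−3)`
respectively: the zero energy resonances of the Regge–Wheeler operator. -/
theorem zero_energy_resonances
    (M : ℝ) (hM : 0 < M) (r : ℝ → ℝ)
    (hr2M : ∀ x : ℝ, 2 * M < r x)
    (hrx : ∀ x : ℝ, x = r x + 2 * M * Real.log (r x / (2 * M) - 1))
    (hr' : ∀ x : ℝ, HasDerivAt r (1 - 2 * M / r x) x) :
    -- the Regge--Wheeler potential with parameters (ℓ, σ)
    let V : ℝ → ℝ → ℝ → ℝ := fun ℓ σ x =>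
      (1 - 2 * M / r x) * (ℓ * (ℓ + 1) / (r x) ^ 2 + 2 * M * σ / (r x) ^ 3)
    -- (ℓ,σ) = (0,0):  f(x) = 1
    ((∃ B : ℝ, ∀ x : ℝ, |(1 : ℝ)| ≤ B) ∧ (∃ x : ℝ, (1 : ℝ) ≠ 0) ∧
      (∀ x : ℝ, deriv (deriv fun _ : ℝ => (1 : ℝ)) x = V 0 0 x * 1)) ∧
    -- (ℓ,σ) = (0,−3):  f(x) = 1 − 3M/r(x)
    ((∃ B : ℝ, ∀ x : ℝ, |1 - 3 * M / r x| ≤ B) ∧ (∃ x : ℝ, 1 - 3 * M / r x ≠ 0) ∧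
      (∀ x : ℝ, deriv (deriv fun t : ℝ => 1 - 3 * M / r t) x =
        V 0 (-3) x * (1 - 3 * M / r x))) ∧
    -- (ℓ,σ) = (1,−3):  f(x) = 1/r(x)
    ((∃ B : ℝ, ∀ x : ℝ, |1 / r x| ≤ B) ∧ (∃ x : ℝ, 1 / r x ≠ 0) ∧
      (∀ x : ℝ, deriv (deriv fun t : ℝ => 1 / r t) x = V 1 (-3) x * (1 / r x))) := by
  intro V
  have hrpos : ∀ x, 0 < r x := fun x => lt_trans (by linarith) (hr2M x)
  have hrne : ∀ x, r x ≠ 0 := fun x => ne_of_gt (hrpos x)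
  -- derivative of c * (r x)^(n+1)⁻¹
  have key : ∀ (n : ℕ) (x : ℝ), HasDerivAt (fun t => ((r t) ^ (n + 1))⁻¹)
      (-((n + 1 : ℕ) * (r x) ^ n * (1 - 2 * M / r x)) / ((r x) ^ (n + 1)) ^ 2) x := by
    intro n x
    exact ((hr' x).pow (n + 1)).inv (pow_ne_zero _ (hrne x))
  -- first derivative of f₂ = 1 - 3M/r
  have hf2 : ∀ x, HasDerivAt (fun t => 1 - 3 * M / r t)
      (3 * M * (1 - 2 * M / r x) / (r x) ^ 2) x := by
    intro x
    have heq : (fun t => 1 - 3 * M / r t) = (fun t => 1 - 3 * M * ((r t) ^ (0 + 1))⁻¹) := by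
      funext t; rw [pow_one, div_eq_mul_inv]
    rw [heq]
    have h := ((key 0 x).const_mul (3 * M)).const_sub 1
    convert h using 1
    rfl
    rfl
    field_simp
    ring
  have hd2 : deriv (fun t => 1 - 3 * M / r t) = fun x => 3 * M * (1 - 2 * M / r x) / (r x) ^ 2 :=
    funext fun x => (hf2 x).deriv
  -- first derivative of f₃ = 1/r
  have hf3 : ∀ x, HasDerivAt (fun t => 1 / r t)
      (-(1 - 2 * M / r x) / (r x) ^ 2) x := by
    intro x
    have heq : (fun t => 1 / r t) = (fun t => ((r t) ^ (0 + 1))⁻¹) := by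
      funext t; rw [pow_one, one_div]
    rw [heq]
    have h := key 0 x
    convert h using 1
    field_simp
    simp
  have hd3 : deriv (fun t => 1 / r t) = fun x => -(1 - 2 * M / r x) / (r x) ^ 2 :=
    funext fun x => (hf3 x).deriv
  refine ⟨⟨⟨1, fun x => by norm_num⟩, ⟨0, one_ne_zero⟩, fun x => by
      simp [deriv_const', V]⟩, ?_, ?_⟩
  · refine ⟨⟨2, fun x => ?_⟩, ?_, fun x => ?_⟩
    · have h1 : 0 ≤ 3 * M / r x := div_nonneg (by linarith) (le_of_lt (hrpos x))
      have h2 : 3 * M / r x ≤ 3 / 2 := by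
        rw [div_le_iff₀ (hrpos x)]
        nlinarith [hr2M x]
      rw [abs_le]; constructor <;> linarith
    · -- pick x with r x ≠ 3M
      set c : ℝ := 3 * M + 2 * M * Real.log (3 * M / (2 * M) - 1) with hc
      refine ⟨c + 1, fun h => ?_⟩
      have hr3 : r (c + 1) = 3 * M := by
        have h' : 3 * M / r (c + 1) = 1 := by linarith
        field_simp [hrne] at h'
        linarith
      have := hrx (c + 1)
      rw [hr3] at this
      rw [← hc] at this
      linarith
    · rw [hd2]
      have heq : (fun x => 3 * M * (1 - 2 * M / r x) / (r x) ^ 2)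
          = (fun x => 3 * M * ((r x) ^ (1 + 1))⁻¹ - 6 * M ^ 2 * ((r x) ^ (2 + 1))⁻¹) := by
        funext t; field_simp; ring
      rw [heq]
      have h := ((key 1 x).const_mul (3 * M)).sub ((key 2 x).const_mul (6 * M ^ 2))
      erw [h.deriv]
      have hne := hrne x
      simp only [V]
      field_simp
      ring
  · refine ⟨⟨1 / (2 * M), fun x => ?_⟩, ⟨0, one_div_ne_zero (hrne 0)⟩, fun x => ?_⟩
    · rw [abs_of_pos (one_div_pos.mpr (hrpos x))]
      rw [div_le_div_iff₀ (hrpos x) (by positivity)]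
      linarith [hr2M x]
    · rw [hd3]
      have heq : (fun x => -(1 - 2 * M / r x) / (r x) ^ 2)
          = (fun x => -((r x) ^ (1 + 1))⁻¹ + 2 * M * ((r x) ^ (2 + 1))⁻¹) := by
        funext t; field_simp; ring
      rw [heq]
      have h := ((key 1 x).neg).add ((key 2 x).const_mul (2 * M))
      erw [h.deriv]
      have hne := hrne x
      simp only [V]
      field_simp
      ring
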